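/- Let f be a discrete Morse function on a finite connected tree T with level subcomplex filtration indexed by the critical values c₀ < c₁ < ⋯ < c_{m−1}. A vertex v gives a new connected component at level c_i (i.e., v is in no component of T_{c_i} that meets T_{c_{i−1}}) if and only if v is a critical vertex with f(v) = c_i. -/
import Mathlib


/-- A (flat) discrete Morse function on a graph `G`, given by its values `fv` on
vertices and `fe` on edges: it is monotone, and each value is attained at most
twice, with equal values only on an incident vertex-edge pair. -/
def IsDMF {V : Type*} (G : SimpleGraph V) (fv : V → ℝ) (fe : Sym2 V → ℝ) : Prop :=
  (∀ v : V, ∀ e ∈ G.edgeSet, v ∈ e → fv v ≤ fe e) ∧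
  Function.Injective fv ∧
  (∀ e ∈ G.edgeSet, ∀ e' ∈ G.edgeSet, fe e = fe e' → e = e') ∧
  (∀ v : V, ∀ e ∈ G.edgeSet, fv v = fe e → v ∈ e)

/-- A vertex is critical if no incident edge shares its value. -/
def IsCritVtx {V : Type*} (G : SimpleGraph V) (fv : V → ℝ) (fe : Sym2 V → ℝ)
    (v : V) : Prop :=
  ∀ e ∈ G.edgeSet, v ∈ e → fv v ≠ fe e

/-- An edge is critical if no endpoint shares its value. -/
def IsCritEdge {V : Type*} (G : SimpleGraph V) (fv : V → ℝ) (fe : Sym2 V → ℝ)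
    (e : Sym2 V) : Prop :=
  e ∈ G.edgeSet ∧ ∀ v ∈ e, fv v ≠ fe e

/-- A critical value is a value of a critical simplex. -/
def IsCritValue {V : Type*} (G : SimpleGraph V) (fv : V → ℝ) (fe : Sym2 V → ℝ)
    (x : ℝ) : Prop :=
  (∃ v : V, IsCritVtx G fv fe v ∧ fv v = x) ∨
  (∃ e : Sym2 V, IsCritEdge G fv fe e ∧ fe e = x)

/-- The graph of the level subcomplex at level `a` (edges of value ≤ a). -/
def levelGraph {V : Type*} (G : SimpleGraph V) (fe : Sym2 V → ℝ) (a : ℝ) :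
    SimpleGraph V :=
  SimpleGraph.fromEdgeSet {e | e ∈ G.edgeSet ∧ fe e ≤ a}

/-- The graph of the part of the filtration strictly below level `a`. -/
def levelGraphLt {V : Type*} (G : SimpleGraph V) (fe : Sym2 V → ℝ) (a : ℝ) :
    SimpleGraph V :=
  SimpleGraph.fromEdgeSet {e | e ∈ G.edgeSet ∧ fe e < a}

/-- The homology class born at the critical vertex `v` dies at the critical edge
`e`: just below level `f(e)`, `e` joins two distinct components, `v` is the
minimum-value vertex of its component, and the other component contains a vertex
of strictly smaller value. -/
def Dies {V : Type*} (G : SimpleGraph V) (fv : V → ℝ) (fe : Sym2 V → ℝ)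
    (v : V) (e : Sym2 V) : Prop :=
  ∃ a b : V, e = s(a, b) ∧
    ¬ (levelGraphLt G fe (fe e)).Reachable a b ∧
    (levelGraphLt G fe (fe e)).Reachable a v ∧
    (∀ x : V, (levelGraphLt G fe (fe e)).Reachable a x → fv v ≤ fv x) ∧
    (∃ u : V, (levelGraphLt G fe (fe e)).Reachable b u ∧ fv u < fv v)

/-- The finite part of the degree-0 persistence diagram: pairs (birth, death). -/
def D0fin {V : Type*} (G : SimpleGraph V) (fv : V → ℝ) (fe : Sym2 V → ℝ) :
    Set (ℝ × ℝ) :=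
  {p | ∃ (v : V) (e : Sym2 V), IsCritVtx G fv fe v ∧ IsCritEdge G fv fe e ∧
    fv v = p.1 ∧ fe e = p.2 ∧ Dies G fv fe v e}

/-- Birth times of essential degree-0 classes (components that never die). -/
def D0inf {V : Type*} (G : SimpleGraph V) (fv : V → ℝ) (fe : Sym2 V → ℝ) :
    Set ℝ :=
  {x | ∃ v : V, IsCritVtx G fv fe v ∧ fv v = x ∧ ∀ e : Sym2 V, ¬ Dies G fv fe v e}

/-- Birth times of degree-1 classes: critical edges that do not merge components. -/
def D1birth {V : Type*} (G : SimpleGraph V) (fv : V → ℝ) (fe : Sym2 V → ℝ) :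
    Set ℝ :=
  {x | ∃ e : Sym2 V, IsCritEdge G fv fe e ∧ fe e = x ∧ ¬ ∃ v : V, Dies G fv fe v e}

/-- b₀ of the level subcomplex at `a`: components of the level graph containing a
vertex of value ≤ a. -/
noncomputable def levelB0 {V : Type*} (G : SimpleGraph V) (fv : V → ℝ)
    (fe : Sym2 V → ℝ) (a : ℝ) : ℕ :=
  {C : (levelGraph G fe a).ConnectedComponent |
    ∃ u : V, fv u ≤ a ∧ (levelGraph G fe a).connectedComponentMk u = C}.ncard

/-- b₁ of the level subcomplex at `a`, via the Euler characteristic. -/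
noncomputable def levelB1 {V : Type*} (G : SimpleGraph V) (fv : V → ℝ)
    (fe : Sym2 V → ℝ) (a : ℝ) : ℤ :=
  ({e : Sym2 V | e ∈ G.edgeSet ∧ fe e ≤ a}.ncard : ℤ) -
    ({u : V | fv u ≤ a}.ncard : ℤ) + (levelB0 G fv fe a : ℤ)

/-- For consecutive critical values b < c of a discrete Morse function
on a tree, a vertex v is born at level c (it lies in T_c and its connected
component in T_c contains no simplex of T_b) iff v is a critical vertex with
f(v) = c. -/
theorem stmt_14 {V : Type*} [Fintype V] (T : SimpleGraph V) (hT : T.IsTree)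
    (fv : V → ℝ) (fe : Sym2 V → ℝ) (hf : IsDMF T fv fe)
    (b c : ℝ) (hbcrit : IsCritValue T fv fe b) (hccrit : IsCritValue T fv fe c)
    (hbc : b < c)
    (hconsec : ∀ x : ℝ, IsCritValue T fv fe x → ¬ (b < x ∧ x < c)) (v : V) :
    (fv v ≤ c ∧ ∀ u : V, (levelGraph T fe c).Reachable v u → b < fv u) ↔
      (IsCritVtx T fv fe v ∧ fv v = c) := by
  obtain ⟨hmono, hinjv, hinje, hvne⟩ := hf
  constructor
  · rintro ⟨hvc, hb⟩
    have hreach_le : ∀ u, (levelGraph T fe c).Reachable v u → fv u ≤ c := by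
      intro u hu
      rcases eq_or_ne u v with rfl | hne
      · exact hvc
      · obtain ⟨p⟩ := hu.symm
        cases p with
        | nil => exact absurd rfl hne
        | @cons _ w _ hadj p' =>
          rw [levelGraph, SimpleGraph.fromEdgeSet_adj] at hadj
          exact le_trans (hmono u _ hadj.1.1 (Sym2.mem_mk_left u w)) hadj.1.2
    obtain ⟨u₀, hu₀mem, hu₀min⟩ :=
      Set.exists_min_image {u | (levelGraph T fe c).Reachable v u} fv
        (Set.toFinite _) ⟨v, SimpleGraph.Reachable.refl v⟩
    have hu₀crit : IsCritVtx T fv fe u₀ := by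
      intro e he hmem hval
      obtain ⟨w, rfl⟩ := Sym2.mem_iff_exists.mp hmem
      have hadjT : T.Adj u₀ w := T.mem_edgeSet.mp he
      have hle : fe s(u₀, w) ≤ c := by
        rw [← hval]; exact le_trans (hu₀min v (SimpleGraph.Reachable.refl v)) hvc
      have hadj : (levelGraph T fe c).Adj u₀ w := by
        rw [levelGraph, SimpleGraph.fromEdgeSet_adj]
        exact ⟨⟨he, hle⟩, hadjT.ne⟩
      have hwmem : w ∈ {u | (levelGraph T fe c).Reachable v u} :=
        hu₀mem.trans hadj.reachable
      have hwle : fv w ≤ fv u₀ := hval ▸ hmono w _ he (Sym2.mem_mk_right u₀ w)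
      have : fv u₀ ≤ fv w := hu₀min w hwmem
      exact hadjT.ne (hinjv (le_antisymm this hwle))
    have hbu₀ : b < fv u₀ := hb u₀ hu₀mem
    have hu₀c : fv u₀ ≤ c := hreach_le u₀ hu₀mem
    have hcv : IsCritValue T fv fe (fv u₀) := Or.inl ⟨u₀, hu₀crit, rfl⟩
    have hu₀eq : fv u₀ = c := by
      by_contra hne
      exact hconsec (fv u₀) hcv ⟨hbu₀, lt_of_le_of_ne hu₀c hne⟩
    have hveq : fv v = c :=
      le_antisymm hvc (hu₀eq ▸ hu₀min v (SimpleGraph.Reachable.refl v))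
    have : v = u₀ := hinjv (by rw [hveq, hu₀eq])
    exact ⟨this ▸ hu₀crit, hveq⟩
  · rintro ⟨hcrit, rfl⟩
    refine ⟨le_refl _, fun u hu => ?_⟩
    by_contra h
    push_neg at h
    have hne : v ≠ u := by rintro rfl; exact absurd h (not_le.mpr hbc)
    obtain ⟨p⟩ := hu
    cases p with
    | nil => exact hne rfl
    | @cons _ w _ hadj p' =>
      rw [levelGraph, SimpleGraph.fromEdgeSet_adj] at hadj
      exact hcrit _ hadj.1.1 (Sym2.mem_mk_left v w)
        (le_antisymm (hmono v _ hadj.1.1 (Sym2.mem_mk_left v w)) hadj.1.2)
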